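/- For every μ ∈ G_1, χ_μ = θ_μ ∘ Φ, where χ_μ is the character of Y^(1) associated to μ, θ_μ is the character of Sym associated to μ via the S-transform, and Φ: Y^(1) → Sym is the unital algebra homomorphism with Φ(Y_n) = y_n. -/

import Mathlib

open scoped TensorProduct

noncomputable section

namespace FreeProb

attribute [local instance] Classical.propDecidable

/-! ### Non-crossing partitions of `{1,…,n}`, modelled as setoids on `Fin n` -/

/-- The partition `0_n` of `Fin n` into singletons. -/
def botS (n : ℕ) : Setoid (Fin n) := ⟨Eq, eq_equivalence⟩

/-- The partition `1_n` of `Fin n` with a single block. -/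
def topS (n : ℕ) : Setoid (Fin n) :=
  ⟨fun _ _ => True, ⟨fun _ => trivial, fun _ => trivial, fun _ _ => trivial⟩⟩

/-- A partition is non-crossing if there is no crossing `a < b < c < d` with
`a ∼ c`, `b ∼ d` lying in different blocks. -/
def IsNC {n : ℕ} (s : Setoid (Fin n)) : Prop :=
  ∀ a b c d : Fin n, a < b → b < c → c < d → s.r a c → s.r b d → s.r a b

/-- The lattice `NC(n)` of non-crossing partitions, ordered by reversed refinement
(the order inherited from the lattice of setoids). -/
abbrev NC (n : ℕ) := {s : Setoid (Fin n) // IsNC s}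

instance (n : ℕ) : Finite (Setoid (Fin n)) :=
  Finite.of_injective (fun s => s.r) (by intro s t h; cases s; cases t; cases h; rfl)

noncomputable instance (n : ℕ) : Fintype (Setoid (Fin n)) := Fintype.ofFinite _

noncomputable instance (n : ℕ) : Fintype (NC n) := Fintype.ofFinite _

/-- `0_n` as a non-crossing partition. -/
def ncBot (n : ℕ) : NC n :=
  ⟨botS n, by
    intro a b c d h1 h2 h3 hac _
    have hac' : a = c := hac
    subst hac'
    exact absurd (h1.trans h2) (lt_irrefl _)⟩

/-- `1_n` as a non-crossing partition. -/
def ncTop (n : ℕ) : NC n := ⟨topS n, fun _ _ _ _ _ _ _ _ _ => trivial⟩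

/-- The blocks of a partition, as a finset of finsets. -/
def blocks {n : ℕ} (s : Setoid (Fin n)) : Finset (Finset (Fin n)) :=
  Finset.univ.image fun a => Finset.univ.filter fun b => s.r a b

/-- The next element of the block of `b`, in increasing cyclic order. -/
def nextFun {n : ℕ} (s : Setoid (Fin n)) (b : Fin n) : Fin n :=
  let B : Finset (Fin n) := Finset.univ.filter fun a => s.r b a
  let A : Finset (Fin n) := B.filter fun a => b < a
  if h : A.Nonempty then A.min' h
  else B.min' ⟨b, Finset.mem_filter.mpr ⟨Finset.mem_univ b, s.iseqv.refl b⟩⟩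

/-- The permutation `P_π` associated to a partition `π`: its cycles are the blocks
of `π`, traversed in increasing order.  (The function `nextFun` is indeed bijective,
so the `dite` below always takes its first branch.) -/
def permOf {n : ℕ} (s : Setoid (Fin n)) : Equiv.Perm (Fin n) :=
  if h : Function.Bijective (nextFun s) then Equiv.ofBijective _ h else 1

/-- The partition of `Fin n` into the cycles (orbits) of a permutation. -/
def cycleSetoid {n : ℕ} (σ : Equiv.Perm (Fin n)) : Setoid (Fin n) :=
  ⟨σ.SameCycle, ⟨fun x => Equiv.Perm.SameCycle.refl σ x, fun h => h.symm, fun h h' => h.trans h'⟩⟩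

/-- The Kreweras complement `K(π)`, determined by `P_{K(π)} = P_π⁻¹ * P_{1_n}`. -/
def kreweras {n : ℕ} (s : Setoid (Fin n)) : Setoid (Fin n) :=
  cycleSetoid ((permOf s)⁻¹ * permOf (topS n))

/-- The relative Kreweras complement `K_t(s)`, determined by `P_{K_t(s)} = P_s⁻¹ * P_t`. -/
def relKreweras {n : ℕ} (s t : Setoid (Fin n)) : Setoid (Fin n) :=
  cycleSetoid ((permOf s)⁻¹ * permOf t)

/-! ### Words, and the Hopf algebra `Y^(k)` -/

/-- Words over the alphabet `{1,…,k}`, encoded as pairs `⟨n, w⟩` with `w : Fin n → Fin k`. -/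
abbrev WordIdx (k : ℕ) := Σ n : ℕ, Fin n → Fin k

/-- The commutative polynomial algebra `Y^(k) = ℂ[Y_w : |w| ≥ 2]`. -/
abbrev Yalg (k : ℕ) := MvPolynomial {p : WordIdx k // 2 ≤ p.1} ℂ

/-- The generator `Y_w`, with the convention `Y_w = 1` for `|w| ≤ 1`. -/
def Ygen {k : ℕ} (p : WordIdx k) : Yalg k :=
  if h : 2 ≤ p.1 then MvPolynomial.X ⟨p, h⟩ else 1

/-- The subword `w|B` of `w` on the positions in `B` (in increasing order). -/
def subword {k n : ℕ} (w : Fin n → Fin k) (B : Finset (Fin n)) : Fin B.card → Fin k :=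
  fun i => w (B.orderIsoOfFin rfl i).1

/-- The element `Y_{w;π} = ∏_{B block of π} Y_{w|B}`. -/
def Yprod {k n : ℕ} (w : Fin n → Fin k) (s : Setoid (Fin n)) : Yalg k :=
  ∏ B ∈ blocks s, Ygen ⟨B.card, subword w B⟩

/-- The comultiplication of `Y^(k)`:
`Δ(Y_w) = ∑_{π ∈ NC(n)} Y_{w;π} ⊗ Y_{w;K(π)}`. -/
def Δk (k : ℕ) : Yalg k →ₐ[ℂ] Yalg k ⊗[ℂ] Yalg k :=
  MvPolynomial.aeval fun q : {p : WordIdx k // 2 ≤ p.1} =>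
    ∑ π : NC q.1.1, Yprod q.1.2 π.1 ⊗ₜ[ℂ] Yprod q.1.2 (kreweras π.1)

/-- The counit of `Y^(k)`: `ε(Y_w) = 0` for `|w| ≥ 2`. -/
def εk (k : ℕ) : Yalg k →ₐ[ℂ] ℂ := MvPolynomial.aeval fun _ => 0

/-- The grading of `Y^(k)` in which `Y_w` is homogeneous of degree `|w| - 1`. -/
def Ycomp (k n : ℕ) : Submodule ℂ (Yalg k) :=
  MvPolynomial.weightedHomogeneousSubmodule ℂ (fun q : {p : WordIdx k // 2 ≤ p.1} => q.1.1 - 1) n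

/-! ### Convolution of linear functionals on a bialgebra -/

variable {A : Type} [CommRing A] [Algebra ℂ A]

/-- Convolution `ξη := mult ∘ (ξ ⊗ η) ∘ Δ` of two linear functionals. -/
def convF (D : A →ₐ[ℂ] A ⊗[ℂ] A) (ξ η : A →ₗ[ℂ] ℂ) : A →ₗ[ℂ] ℂ :=
  LinearMap.mul' ℂ ℂ ∘ₗ TensorProduct.map ξ η ∘ₗ D.toLinearMap

/-- Convolution powers `ξ^m`, with `ξ^0 := e` (the counit). -/
def convPowF (D : A →ₐ[ℂ] A ⊗[ℂ] A) (e ξ : A →ₗ[ℂ] ℂ) : ℕ → (A →ₗ[ℂ] ℂ)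
  | 0 => e
  | m + 1 => convF D (convPowF D e ξ m) ξ

/-- `(log η)(x) = -∑_{ℓ ≥ 1} (1/ℓ) (e - η)^ℓ (x)`, the logarithm of a functional `η`
with respect to convolution (`e` is the counit).  On each `x` the sum has only finitely
many nonzero terms, so the `tsum` below is the honest value. -/
def logFunF (D : A →ₐ[ℂ] A ⊗[ℂ] A) (e η : A →ₗ[ℂ] ℂ) (x : A) : ℂ :=
  -∑' ℓ : ℕ, (1 / ((ℓ : ℂ) + 1)) * convPowF D e (e - η) (ℓ + 1) x

/-! ### Distributions, R-transforms, free multiplicative convolution -/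

/-- A distribution (or a family of coefficients of a power series in `k` non-commuting
indeterminates), encoded by its values on all words. -/
abbrev Dist (k : ℕ) := WordIdx k → ℂ

/-- `μ ∈ G_k`: `μ(1) = 1` and `μ(X_i) = 1` for all `i`. -/
def InG {k : ℕ} (μ : Dist k) : Prop :=
  (∀ w : Fin 0 → Fin k, μ ⟨0, w⟩ = 1) ∧ (∀ w : Fin 1 → Fin k, μ ⟨1, w⟩ = 1)

/-- `Cf_{w;π}(f) = ∏_{B block of π} Cf_{w|B}(f)`, for a coefficient family `α`. -/
def cfPart {k n : ℕ} (α : Dist k) (w : Fin n → Fin k) (s : Setoid (Fin n)) : ℂ :=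
  ∏ B ∈ blocks s, α ⟨B.card, subword w B⟩

/-- `α` is (the coefficient family of) the R-transform of `μ`:
the moment–cumulant relations hold. -/
def IsRTransform {k : ℕ} (μ α : Dist k) : Prop :=
  (∀ w : Fin 0 → Fin k, α ⟨0, w⟩ = 0) ∧
  ∀ (n : ℕ) (w : Fin n → Fin k), 1 ≤ n → μ ⟨n, w⟩ = ∑ π : NC n, cfPart α w π.1

/-- `γ` is the R-transform of the free multiplicative convolution of distributions
with R-transforms `α` and `β`:
`Cf_w(R_{μ⊠ν}) = ∑_{π ∈ NC(n)} Cf_{w;π}(R_μ) Cf_{w;K(π)}(R_ν)`. -/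
def IsBoxtimes {k : ℕ} (α β γ : Dist k) : Prop :=
  ∀ (n : ℕ) (w : Fin n → Fin k), 1 ≤ n →
    γ ⟨n, w⟩ = ∑ π : NC n, cfPart α w π.1 * cfPart β w (kreweras π.1)

/-- The unit `μ_o` of `(G_k, ⊠)`: all moments equal to `1`. -/
def distUnit (k : ℕ) : Dist k := fun _ => 1

/-- The character `χ_μ` of `Y^(k)` associated to a distribution with R-transform `α`:
`χ_μ(Y_w) = Cf_w(R_μ)`. -/
def charOf {k : ℕ} (α : Dist k) : Yalg k →ₐ[ℂ] ℂ :=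
  MvPolynomial.aeval fun q => α q.1

/-- The generalized coefficient `Cf_w^(Γ)(f) = ∏_{j=1}^{ℓ} Cf_{w;K_{π_j}(π_{j-1})}(f)`
attached to a (multi-)chain `Γ = (π_0,…,π_{m+1})` in `NC(n)`. -/
def cfChain {k n : ℕ} (α : Dist k) (w : Fin n → Fin k) (m : ℕ)
    (c : Fin (m + 2) → Setoid (Fin n)) : ℂ :=
  ∏ j : Fin (m + 1), cfPart α w (relKreweras (c j.castSucc) (c j.succ))

/-- The `i`-th marginal coefficients: the free cumulants of the `i`-th marginal `μ_i`
are `Cf_{(i,…,i)}(R_μ)`. -/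
def margFam {k : ℕ} (α : Dist k) (i : Fin k) : Dist 1 := fun q => α ⟨q.1, fun _ => i⟩


/-! ### Iterated comultiplication -/

/-- The iterated tensor powers `Y^(k) ⊗ ⋯ ⊗ Y^(k)` (`m+1` factors), as objects of
`ModuleCat ℂ` so that the recursion carries its module structure. -/
def YpowM (k : ℕ) : ℕ → ModuleCat ℂ
  | 0 => ModuleCat.of ℂ (Yalg k)
  | m + 1 => ModuleCat.of ℂ (Yalg k ⊗[ℂ] YpowM k m)

/-- The iterated comultiplication: `Δiter k m = Δ^{m+1}` in the notation of the paper
(`Δiter k 0 = id`, `Δiter k (m+1) = (id ⊗ Δ^{m+1}) ∘ Δ`). -/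
def Δiter (k : ℕ) : ∀ m : ℕ, Yalg k →ₗ[ℂ] YpowM k m
  | 0 => LinearMap.id
  | m + 1 => TensorProduct.map LinearMap.id (Δiter k m) ∘ₗ (Δk k).toLinearMap

/-- The pure tensor `Y_{w;K_{π_1}(π_0)} ⊗ ⋯ ⊗ Y_{w;K_{π_{m+1}}(π_m)}` attached to a
multi-chain `(π_0, …, π_{m+1})`. -/
def chainTensor {k n : ℕ} (w : Fin n → Fin k) :
    ∀ m : ℕ, (Fin (m + 2) → Setoid (Fin n)) → YpowM k m
  | 0, c => Yprod w (relKreweras (c 0) (c 1))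
  | m + 1, c => Yprod w (relKreweras (c 0) (c 1)) ⊗ₜ[ℂ] chainTensor w m (fun i => c i.succ)


/-! ### One-variable power series tools -/

/-- The R-transform of a one-variable distribution, as a power series. -/
def Rser (α : Dist 1) : PowerSeries ℂ :=
  PowerSeries.mk fun m => if m = 0 then 0 else α ⟨m, fun _ => 0⟩

/-- Composition `f ∘ g` of formal power series (the honest composition whenever
`g` has vanishing constant term). -/
def psComp (f g : PowerSeries ℂ) : PowerSeries ℂ :=
  PowerSeries.mk fun m =>
    ∑ j ∈ Finset.range (m + 1), PowerSeries.coeff (R := ℂ) j f * PowerSeries.coeff (R := ℂ) m (g ^ j)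

/-- `S` is the S-transform of the distribution with R-transform `α`:
`S(z) = (1/z)·R^{⟨-1⟩}(z)`, i.e. `z·S(z)` is the compositional inverse of `R`. -/
def SChar (α : Dist 1) (S : PowerSeries ℂ) : Prop :=
  PowerSeries.constantCoeff (R := ℂ) S = 1 ∧
  psComp (Rser α) (PowerSeries.X * S) = PowerSeries.X ∧
  psComp (PowerSeries.X * S) (Rser α) = PowerSeries.X

/-- The formal logarithm `log f = -∑_{ℓ≥1} (1/ℓ)(1-f)^ℓ = ∑_{ℓ≥1} ((-1)^{ℓ+1}/ℓ)(f-1)^ℓ`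
of a power series (the honest logarithm whenever `f` has constant term 1). -/
def psLog {B : Type} [CommRing B] [Algebra ℂ B] (f : PowerSeries B) : PowerSeries B :=
  PowerSeries.mk fun m =>
    ∑ ℓ ∈ Finset.range (m + 1), ((-1 : ℂ) ^ (ℓ + 1) / ℓ) • PowerSeries.coeff (R := B) m ((f - 1) ^ ℓ)

/-- The coefficient-wise LS-transform of a one-variable distribution, as a power series. -/
def LSseries (α : Dist 1) : PowerSeries ℂ :=
  PowerSeries.mk fun n =>
    if 2 ≤ n then
      logFunF (Δk 1) (εk 1).toLinearMap (charOf α).toLinearMap (Ygen ⟨n, fun _ => 0⟩)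
    else 0

/-! ### The Hopf algebra `Sym` of symmetric functions -/

/-- `Sym`, realized as the free commutative algebra on the complete homogeneous
symmetric functions `h_1, h_2, …`. -/
abbrev SymA := MvPolynomial {m : ℕ // 1 ≤ m} ℂ

/-- The complete homogeneous symmetric function `h_m` (with `h_0 = 1`). -/
def Hgen (m : ℕ) : SymA := if h : 1 ≤ m then MvPolynomial.X ⟨m, h⟩ else 1

/-- The comultiplication of `Sym`: `Δ(h_n) = ∑_{i=0}^n h_i ⊗ h_{n-i}`. -/
def ΔSym : SymA →ₐ[ℂ] SymA ⊗[ℂ] SymA :=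
  MvPolynomial.aeval fun q : {m : ℕ // 1 ≤ m} =>
    ∑ i ∈ Finset.range (q.1 + 1), Hgen i ⊗ₜ[ℂ] Hgen (q.1 - i)

/-- The counit of `Sym`. -/
def εSym : SymA →ₐ[ℂ] ℂ := MvPolynomial.aeval fun _ => 0

/-- The generating series `h(z) = 1 + ∑ (-1)^n h_n z^n`. -/
def hSymSeries : PowerSeries SymA :=
  PowerSeries.mk fun m => if m = 0 then 1 else (-1 : SymA) ^ m * Hgen m

/-- The generating series `e(z) = 1 + ∑ e_n z^n = 1/h(z)`. -/
def eSymSeries : PowerSeries SymA := PowerSeries.invOfUnit hSymSeries 1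

/-- The elementary symmetric function `e_m`, defined through `e(z) = 1/h(z)`. -/
def eSym (m : ℕ) : SymA := PowerSeries.coeff (R := SymA) m eSymSeries

/-- The power sum symmetric function `p_m`, defined through
`log e(z) = ∑_{m≥1} ((-1)^{m+1}/m) p_m z^m`. -/
def pSym (m : ℕ) : SymA :=
  ((-1 : ℂ) ^ (m + 1) * m) • PowerSeries.coeff (R := SymA) m (psLog eSymSeries)

/-- The grading of `Sym` (`h_n` homogeneous of degree `n`). -/
def SymComp (n : ℕ) : Submodule ℂ SymA :=
  MvPolynomial.weightedHomogeneousSubmodule ℂ (fun q : {m : ℕ // 1 ≤ m} => q.1) n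

/-- The symmetric function `y_n = ∑_{π ∈ NC(n-1)} ∏_{B block of π} e_{|B|}`. -/
def ySym (n : ℕ) : SymA := ∑ π : NC (n - 1), ∏ B ∈ blocks π.1, eSym B.card

/-- The homomorphism `Φ : Y^(1) → Sym`, `Φ(Y_n) = y_n`. -/
def Phi : Yalg 1 →ₐ[ℂ] SymA := MvPolynomial.aeval fun q => ySym q.1.1

/-- The character `θ_μ` of `Sym` attached to a distribution with S-transform `S`:
`θ_μ(h_n) = (-1)^n β_n` where `S(z) = 1 + ∑ β_n z^n`. -/
def thetaOf (S : PowerSeries ℂ) : SymA →ₐ[ℂ] ℂ :=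
  MvPolynomial.aeval fun q : {m : ℕ // 1 ≤ m} =>
    (-1 : ℂ) ^ q.1 * PowerSeries.coeff (R := ℂ) q.1 S

/-- Infinitesimal characters of `Sym`. -/
def IsInfCharSym (ξ : SymA →ₗ[ℂ] ℂ) : Prop :=
  ∀ u v : SymA, ξ (u * v) = ξ u * εSym v + εSym u * ξ v


/-! ### Auxiliary development for Statement 12 -/

section AuxNC

open Finset

variable {n : ℕ}

/-- The block of `a` in a partition. -/
def blk (s : Setoid (Fin n)) (a : Fin n) : Finset (Fin n) :=
  Finset.univ.filter fun b => s.r a b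

lemma mem_blk {s : Setoid (Fin n)} {a b : Fin n} : b ∈ blk s a ↔ s.r a b := by
  simp [blk]

lemma self_mem_blk (s : Setoid (Fin n)) (a : Fin n) : a ∈ blk s a :=
  mem_blk.2 (s.iseqv.refl a)

lemma blk_eq_of_rel {s : Setoid (Fin n)} {a b : Fin n} (h : s.r a b) : blk s a = blk s b := by
  ext x
  simp only [mem_blk]
  exact ⟨fun h2 => s.iseqv.trans (s.iseqv.symm h) h2, fun h2 => s.iseqv.trans h h2⟩

/-- Representatives: the minimal elements of blocks. -/
def reps (s : Setoid (Fin n)) : Finset (Fin n) :=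
  Finset.univ.filter fun a => ∀ b, s.r a b → a ≤ b

lemma mem_reps {s : Setoid (Fin n)} {a : Fin n} : a ∈ reps s ↔ ∀ b, s.r a b → a ≤ b := by
  simp [reps]

lemma exists_rep (s : Setoid (Fin n)) (a : Fin n) : ∃ b ∈ reps s, s.r a b := by
  have hne : (blk s a).Nonempty := ⟨a, self_mem_blk s a⟩
  have hm : s.r a ((blk s a).min' hne) := mem_blk.1 ((blk s a).min'_mem hne)
  exact ⟨(blk s a).min' hne,
    mem_reps.2 fun b hb => Finset.min'_le _ _ (mem_blk.2 (s.iseqv.trans hm hb)), hm⟩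

lemma rep_eq {s : Setoid (Fin n)} {a b : Fin n} (ha : a ∈ reps s) (hb : b ∈ reps s)
    (h : s.r a b) : a = b :=
  le_antisymm (mem_reps.1 ha b h) (mem_reps.1 hb a (s.iseqv.symm h))

lemma blocks_eq_image_reps (s : Setoid (Fin n)) : blocks s = (reps s).image (blk s) := by
  ext B
  simp only [blocks, Finset.mem_image, Finset.mem_univ, true_and]
  constructor
  · rintro ⟨a, rfl⟩
    obtain ⟨b, hb, hab⟩ := exists_rep s a
    exact ⟨b, hb, (blk_eq_of_rel hab).symm⟩
  · rintro ⟨a, -, rfl⟩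
    exact ⟨a, rfl⟩

lemma prod_blocks_eq_prod_reps (s : Setoid (Fin n)) (f : Finset (Fin n) → ℂ) :
    ∏ B ∈ blocks s, f B = ∏ a ∈ reps s, f (blk s a) := by
  rw [blocks_eq_image_reps]
  refine Finset.prod_image fun a ha b hb h => rep_eq ha hb ?_
  have hb' := self_mem_blk s b
  rw [← h] at hb'
  exact mem_blk.1 hb'

/-- The block of the (virtual) element `0`. -/
def blk0 (s : Setoid (Fin n)) : Finset (Fin n) :=
  Finset.univ.filter fun b => ∃ a : Fin n, a.1 = 0 ∧ s.r a b

lemma mem_blk0 {s : Setoid (Fin n)} {b : Fin n} :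
    b ∈ blk0 s ↔ ∃ a : Fin n, a.1 = 0 ∧ s.r a b := by simp [blk0]

lemma blk0_eq {m : ℕ} (s : Setoid (Fin (m + 1))) : blk0 s = blk s 0 := by
  ext b
  rw [mem_blk0, mem_blk]
  constructor
  · rintro ⟨a, ha, hr⟩
    have : a = 0 := Fin.ext ha
    rwa [this] at hr
  · intro h
    exact ⟨0, rfl, h⟩

/-- shift of a coefficient family -/
def shiftc (d : ℕ → ℂ) : ℕ → ℂ := fun m => d (m + 1)

/-- weight of a partition, with the block of `0` marked. -/
def wgt (c d : ℕ → ℂ) (s : Setoid (Fin n)) : ℂ :=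
  d (blk0 s).card * ∏ a ∈ (reps s).filter (fun a => a.1 ≠ 0), c (blk s a).card

/-- marked non-crossing partition sums -/
def Aa (c d : ℕ → ℂ) (m : ℕ) : ℂ := ∑ π : NC m, wgt c d π.1

/-- non-crossing partition sums -/
def Nn (c : ℕ → ℂ) (m : ℕ) : ℂ := ∑ π : NC m, ∏ a ∈ reps π.1, c (blk π.1 a).card

instance : Unique (NC 0) where
  default := ncBot 0
  uniq := fun π => Subtype.ext (Setoid.ext fun a => a.elim0)

lemma finset_fin_zero_empty (s : Finset (Fin 0)) : s = ∅ :=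
  Finset.eq_empty_of_forall_notMem fun x => x.elim0

lemma Aa_zero (c d : ℕ → ℂ) : Aa c d 0 = d 0 := by
  rw [Aa, Fintype.sum_unique]
  rw [wgt, finset_fin_zero_empty (blk0 _), finset_fin_zero_empty ((reps _).filter _)]
  simp

lemma Nn_zero (c : ℕ → ℂ) : Nn c 0 = 1 := by
  rw [Nn, Fintype.sum_unique, finset_fin_zero_empty (reps _)]
  simp

end AuxNC

section AuxPS

open Finset PowerSeries

lemma coeff_pow_zero_of_lt {f : PowerSeries ℂ} (hf : constantCoeff (R := ℂ) f = 0) :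
    ∀ j t : ℕ, t < j → coeff (R := ℂ) t (f ^ j) = 0 := by
  intro j
  induction j with
  | zero => intro t ht; omega
  | succ j ihj =>
    intro t ht
    rw [pow_succ, PowerSeries.coeff_mul]
    refine Finset.sum_eq_zero fun pq hpq => ?_
    have hm := Finset.HasAntidiagonal.mem_antidiagonal.1 hpq
    by_cases hq : pq.2 = 0
    · have : coeff (R := ℂ) pq.2 f = 0 := by
        rw [hq]
        simpa [PowerSeries.coeff_zero_eq_constantCoeff] using hf
      rw [this, mul_zero]
    · rw [ihj pq.1 (by omega), zero_mul]

lemma coeff_pow_congr {f g : PowerSeries ℂ} {m : ℕ}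
    (h : ∀ k ≤ m, coeff (R := ℂ) k f = coeff (R := ℂ) k g) :
    ∀ j, ∀ k ≤ m, coeff (R := ℂ) k (f ^ j) = coeff (R := ℂ) k (g ^ j) := by
  intro j
  induction j with
  | zero => intro k _; rfl
  | succ j ihj =>
    intro k hk
    rw [pow_succ, pow_succ, PowerSeries.coeff_mul, PowerSeries.coeff_mul]
    refine Finset.sum_congr rfl fun pq hpq => ?_
    have hm := Finset.HasAntidiagonal.mem_antidiagonal.1 hpq
    rw [ihj pq.1 (by omega), h pq.2 (by omega)]

lemma coeff_psComp (f g : PowerSeries ℂ) (m : ℕ) :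
    coeff (R := ℂ) m (psComp f g) = ∑ j ∈ range (m + 1), coeff (R := ℂ) j f * coeff (R := ℂ) m (g ^ j) :=
  PowerSeries.coeff_mk _ _

lemma psComp_one (g : PowerSeries ℂ) : psComp 1 g = 1 := by
  ext m
  rw [coeff_psComp]
  rw [Finset.sum_eq_single 0]
  · simp
  · intro b _ hb
    rw [PowerSeries.coeff_one, if_neg hb, zero_mul]
  · intro h
    exact absurd (Finset.mem_range.2 (by omega)) h

lemma psComp_X {g : PowerSeries ℂ} (hg : constantCoeff (R := ℂ) g = 0) : psComp X g = g := by
  ext m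
  rw [coeff_psComp]
  rcases m with - | m
  · simp [PowerSeries.coeff_zero_eq_constantCoeff, hg]
  · rw [Finset.sum_eq_single 1]
    · rw [PowerSeries.coeff_one_X, pow_one, one_mul]
    · intro b _ hb
      rw [PowerSeries.coeff_X, if_neg hb, zero_mul]
    · intro h
      exact absurd (Finset.mem_range.2 (by omega)) h


lemma psComp_mul (f g h : PowerSeries ℂ) (hh : constantCoeff (R := ℂ) h = 0) :
    psComp (f * g) h = psComp f h * psComp g h := by
  ext m
  rw [PowerSeries.coeff_mul, coeff_psComp]
  have hV := coeff_pow_zero_of_lt hh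
  have L : ∑ j ∈ range (m + 1), coeff (R := ℂ) j (f * g) * coeff (R := ℂ) m (h ^ j)
      = ∑ p ∈ range (m + 1) ×ˢ range (m + 1),
          coeff (R := ℂ) p.1 f * coeff (R := ℂ) p.2 g * coeff (R := ℂ) m (h ^ (p.1 + p.2)) := by
    have step1 : ∑ j ∈ range (m + 1), coeff (R := ℂ) j (f * g) * coeff (R := ℂ) m (h ^ j)
        = ∑ j ∈ range (m + 1), ∑ p ∈ Finset.HasAntidiagonal.antidiagonal j,
            coeff (R := ℂ) p.1 f * coeff (R := ℂ) p.2 g * coeff (R := ℂ) m (h ^ (p.1 + p.2)) := by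
      refine Finset.sum_congr rfl fun j hj => ?_
      rw [PowerSeries.coeff_mul, Finset.sum_mul]
      refine Finset.sum_congr rfl fun p hp => ?_
      rw [Finset.HasAntidiagonal.mem_antidiagonal.1 hp]
    rw [step1, ← Finset.sum_biUnion]
    · refine Finset.sum_subset ?_ ?_
      · intro p hp
        obtain ⟨j, hj, hpj⟩ := Finset.mem_biUnion.1 hp
        have hj' := Finset.mem_range.1 hj
        have hpj' := Finset.HasAntidiagonal.mem_antidiagonal.1 hpj
        exact Finset.mem_product.2 ⟨Finset.mem_range.2 (by omega), Finset.mem_range.2 (by omega)⟩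
      · intro p hp hnp
        have h1 : m < p.1 + p.2 := by
          by_contra hc
          exact hnp (Finset.mem_biUnion.2 ⟨p.1 + p.2, Finset.mem_range.2 (by omega),
            Finset.HasAntidiagonal.mem_antidiagonal.2 rfl⟩)
        rw [hV _ _ h1, mul_zero]
    · intro x _ y _ hxy
      simp only [Finset.disjoint_left]
      intro p hp hq
      exact hxy ((Finset.HasAntidiagonal.mem_antidiagonal.1 hp).symm.trans (Finset.HasAntidiagonal.mem_antidiagonal.1 hq))
  rw [L]
  have R : ∀ q ∈ Finset.HasAntidiagonal.antidiagonal m,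
      coeff (R := ℂ) q.1 (psComp f h) * coeff (R := ℂ) q.2 (psComp g h)
        = ∑ a ∈ range (m + 1), ∑ b ∈ range (m + 1),
            coeff (R := ℂ) a f * coeff (R := ℂ) b g * (coeff (R := ℂ) q.1 (h ^ a) * coeff (R := ℂ) q.2 (h ^ b)) := by
    intro q hq
    have hqm := Finset.HasAntidiagonal.mem_antidiagonal.1 hq
    have e1 : coeff (R := ℂ) q.1 (psComp f h) = ∑ a ∈ range (m + 1), coeff (R := ℂ) a f * coeff (R := ℂ) q.1 (h ^ a) := by
      rw [coeff_psComp]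
      refine Finset.sum_subset (by intro a ha; simp only [Finset.mem_range] at *; omega) ?_
      intro a _ hna
      rw [hV a q.1 (by simp only [Finset.mem_range] at hna; omega), mul_zero]
    have e2 : coeff (R := ℂ) q.2 (psComp g h) = ∑ b ∈ range (m + 1), coeff (R := ℂ) b g * coeff (R := ℂ) q.2 (h ^ b) := by
      rw [coeff_psComp]
      refine Finset.sum_subset (by intro b hb; simp only [Finset.mem_range] at *; omega) ?_
      intro b _ hnb
      rw [hV b q.2 (by simp only [Finset.mem_range] at hnb; omega), mul_zero]
    rw [e1, e2, Finset.sum_mul_sum]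
    refine Finset.sum_congr rfl fun a _ => Finset.sum_congr rfl fun b _ => ?_
    ring
  rw [Finset.sum_congr rfl R, Finset.sum_comm]
  rw [Finset.sum_product]
  refine Finset.sum_congr rfl fun a _ => ?_
  rw [Finset.sum_comm]
  refine Finset.sum_congr rfl fun b _ => ?_
  rw [← Finset.mul_sum, ← PowerSeries.coeff_mul, ← pow_add]

end AuxPS


section AuxGlue

open Finset

/-- position of the first return of the block of `0` (or `n+1`). -/
def sOf (n : ℕ) (π : Setoid (Fin (n + 1))) : ℕ :=
  if h : ((blk π 0).erase 0).Nonempty then (((blk π 0).erase 0).min' h).1 else n + 1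

def e1 (n s : ℕ) (hs2 : s ≤ n + 1) (i : Fin (s - 1)) : Fin (n + 1) :=
  ⟨i.1 + 1, by have := i.2; omega⟩

def e2 (n s : ℕ) (i : Fin (n + 1 - s)) : Fin (n + 1) :=
  ⟨i.1 + s, by have := i.2; omega⟩

lemma e1_val (n s : ℕ) (hs2 : s ≤ n + 1) (i : Fin (s - 1)) : (e1 n s hs2 i).1 = i.1 + 1 := rfl

lemma e2_val (n s : ℕ) (i : Fin (n + 1 - s)) : (e2 n s i).1 = i.1 + s := rfl

lemma e1_inj {n s : ℕ} {hs2 : s ≤ n + 1} : Function.Injective (e1 n s hs2) := by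
  intro i j h
  have := congrArg Fin.val h
  simp only [e1_val] at this
  exact Fin.ext (by omega)

lemma e2_inj {n s : ℕ} : Function.Injective (e2 n s) := by
  intro i j h
  have := congrArg Fin.val h
  simp only [e2_val] at this
  exact Fin.ext (by omega)

lemma e1_strictMono {n s : ℕ} {hs2 : s ≤ n + 1} : StrictMono (e1 n s hs2) := by
  intro i j h
  simp only [Fin.lt_def, e1_val]
  have := (Fin.lt_def).1 h
  omega

lemma e2_strictMono {n s : ℕ} : StrictMono (e2 n s) := by
  intro i j h
  simp only [Fin.lt_def, e2_val]
  have := (Fin.lt_def).1 h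
  omega

/-- restriction of a partition along a map. -/
def resAlong {m k : ℕ} (f : Fin k → Fin m) (π : Setoid (Fin m)) : Setoid (Fin k) :=
  ⟨fun i j => π.r (f i) (f j),
    ⟨fun i => π.iseqv.refl _, fun h => π.iseqv.symm h, fun h h' => π.iseqv.trans h h'⟩⟩

lemma resAlong_r {m k : ℕ} (f : Fin k → Fin m) (π : Setoid (Fin m)) (i j : Fin k) :
    (resAlong f π).r i j ↔ π.r (f i) (f j) := Iff.rfl

lemma resAlong_NC {m k : ℕ} {f : Fin k → Fin m} (hf : StrictMono f) {π : Setoid (Fin m)}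
    (hπ : IsNC π) : IsNC (resAlong f π) :=
  fun a b c d h1 h2 h3 h4 h5 => hπ _ _ _ _ (hf h1) (hf h2) (hf h3) h4 h5

/-- relation gluing `ρ` (middle) and `τ` (right, sharing its first block with `0`). -/
def grel (n s : ℕ) (hs2 : s ≤ n + 1) (ρ : Setoid (Fin (s - 1))) (τ : Setoid (Fin (n + 1 - s)))
    (a b : Fin (n + 1)) : Prop :=
  (a.1 = 0 ∧ b.1 = 0) ∨
  (∃ i j : Fin (s - 1), e1 n s hs2 i = a ∧ e1 n s hs2 j = b ∧ ρ.r i j) ∨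
  (∃ i j : Fin (n + 1 - s), (e2 n s i = a ∨ (a.1 = 0 ∧ i.1 = 0)) ∧
      (e2 n s j = b ∨ (b.1 = 0 ∧ j.1 = 0)) ∧ τ.r i j)

lemma rep3_eq {n s : ℕ} (hs1 : 1 ≤ s) {i j : Fin (n + 1 - s)} {b : Fin (n + 1)}
    (hi : e2 n s i = b ∨ (b.1 = 0 ∧ i.1 = 0)) (hj : e2 n s j = b ∨ (b.1 = 0 ∧ j.1 = 0)) :
    i = j := by
  rcases hi with hi | hi <;> rcases hj with hj | hj
  · have h1 := congrArg Fin.val hi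
    have h2 := congrArg Fin.val hj
    simp only [e2_val] at h1 h2
    exact Fin.ext (by omega)
  · have h1 := congrArg Fin.val hi
    simp only [e2_val] at h1
    omega
  · have h1 := congrArg Fin.val hj
    simp only [e2_val] at h1
    omega
  · exact Fin.ext (hi.2.trans hj.2.symm)

lemma grel_refl (n s : ℕ) (hs2 : s ≤ n + 1) (ρ : Setoid (Fin (s - 1)))
    (τ : Setoid (Fin (n + 1 - s))) (a : Fin (n + 1)) : grel n s hs2 ρ τ a a := by
  rcases Nat.lt_or_ge a.1 s with h | h
  · rcases Nat.eq_zero_or_pos a.1 with h0 | h0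
    · exact Or.inl ⟨h0, h0⟩
    · refine Or.inr (Or.inl ⟨⟨a.1 - 1, by omega⟩, ⟨a.1 - 1, by omega⟩, ?_, ?_, ρ.iseqv.refl _⟩) <;>
        exact Fin.ext (by simp only [e1_val]; omega)
  · refine Or.inr (Or.inr ⟨⟨a.1 - s, by have := a.2; omega⟩, ⟨a.1 - s, by have := a.2; omega⟩,
      Or.inl (Fin.ext (by simp only [e2_val]; omega)),
      Or.inl (Fin.ext (by simp only [e2_val]; omega)), τ.iseqv.refl _⟩)

lemma grel_symm {n s : ℕ} {hs2 : s ≤ n + 1} {ρ : Setoid (Fin (s - 1))}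
    {τ : Setoid (Fin (n + 1 - s))} {a b : Fin (n + 1)}
    (h : grel n s hs2 ρ τ a b) : grel n s hs2 ρ τ b a := by
  rcases h with ⟨ha, hb⟩ | ⟨i, j, hi, hj, hr⟩ | ⟨i, j, hi, hj, hr⟩
  · exact Or.inl ⟨hb, ha⟩
  · exact Or.inr (Or.inl ⟨j, i, hj, hi, ρ.iseqv.symm hr⟩)
  · exact Or.inr (Or.inr ⟨j, i, hj, hi, τ.iseqv.symm hr⟩)

lemma grel_trans {n s : ℕ} (hs1 : 1 ≤ s) {hs2 : s ≤ n + 1} {ρ : Setoid (Fin (s - 1))}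
    {τ : Setoid (Fin (n + 1 - s))} {a b c : Fin (n + 1)}
    (h1 : grel n s hs2 ρ τ a b) (h2 : grel n s hs2 ρ τ b c) : grel n s hs2 ρ τ a c := by
  rcases h1 with ⟨ha, hb⟩ | ⟨i, j, hi, hj, hr⟩ | ⟨i, j, hi, hj, hr⟩ <;>
    rcases h2 with ⟨hb', hc⟩ | ⟨i', j', hi', hj', hr'⟩ | ⟨i', j', hi', hj', hr'⟩
  · exact Or.inl ⟨ha, hc⟩
  · exfalso
    have := congrArg Fin.val hi'
    simp only [e1_val] at this
    omega
  · rcases hi' with hi' | hi'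
    · exfalso
      have := congrArg Fin.val hi'
      simp only [e2_val] at this
      omega
    · exact Or.inr (Or.inr ⟨i', j', Or.inr ⟨ha, hi'.2⟩, hj', hr'⟩)
  · exfalso
    have := congrArg Fin.val hj
    simp only [e1_val] at this
    omega
  · have hji : j = i' := e1_inj (hj.trans hi'.symm)
    exact Or.inr (Or.inl ⟨i, j', hi, hj', ρ.iseqv.trans hr (by rw [hji]; exact hr')⟩)
  · exfalso
    have h1 := congrArg Fin.val hj
    simp only [e1_val] at h1
    have h2 := j.2
    rcases hi' with hi' | hi'
    · have h3 := congrArg Fin.val hi'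
      simp only [e2_val] at h3
      omega
    · omega
  · rcases hj with hj | hj
    · exfalso
      have := congrArg Fin.val hj
      simp only [e2_val] at this
      omega
    · exact Or.inr (Or.inr ⟨i, j, hi, Or.inr ⟨hc, hj.2⟩, hr⟩)
  · exfalso
    have h1 := congrArg Fin.val hi'
    simp only [e1_val] at h1
    have h2 := i'.2
    rcases hj with hj | hj
    · have h3 := congrArg Fin.val hj
      simp only [e2_val] at h3
      omega
    · omega
  · have hji : j = i' := rep3_eq hs1 hj hi'
    exact Or.inr (Or.inr ⟨i, j', hi, hj', τ.iseqv.trans hr (by rw [hji]; exact hr')⟩)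

/-- the glued partition. -/
def glue (n s : ℕ) (hs1 : 1 ≤ s) (hs2 : s ≤ n + 1) (ρ : Setoid (Fin (s - 1)))
    (τ : Setoid (Fin (n + 1 - s))) : Setoid (Fin (n + 1)) :=
  ⟨grel n s hs2 ρ τ,
    ⟨grel_refl n s hs2 ρ τ, grel_symm, fun h h' => grel_trans hs1 h h'⟩⟩

lemma glue_r (n s : ℕ) (hs1 : 1 ≤ s) (hs2 : s ≤ n + 1) (ρ : Setoid (Fin (s - 1)))
    (τ : Setoid (Fin (n + 1 - s))) (a b : Fin (n + 1)) :
    (glue n s hs1 hs2 ρ τ).r a b ↔ grel n s hs2 ρ τ a b := Iff.rfl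


lemma glue_NC {n s : ℕ} (hs1 : 1 ≤ s) (hs2 : s ≤ n + 1) {ρ : Setoid (Fin (s - 1))}
    {τ : Setoid (Fin (n + 1 - s))} (hρ : IsNC ρ) (hτ : IsNC τ) :
    IsNC (glue n s hs1 hs2 ρ τ) := by
  intro a b c d hab hbc hcd h13 h24
  have hab' := Fin.lt_def.1 hab
  have hbc' := Fin.lt_def.1 hbc
  have hcd' := Fin.lt_def.1 hcd
  rcases h13 with ⟨ha, hc⟩ | ⟨i, j, hi, hj, hr⟩ | ⟨i, j, hi, hj, hr⟩
  · omega
  · -- a, c middle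
    have hiv := congrArg Fin.val hi
    have hjv := congrArg Fin.val hj
    simp only [e1_val] at hiv hjv
    have hi2 := i.2
    have hj2 := j.2
    rcases h24 with ⟨hb, hd⟩ | ⟨i', j', hi', hj', hr'⟩ | ⟨i', j', hi', hj', hr'⟩
    · omega
    · have hiv' := congrArg Fin.val hi'
      have hjv' := congrArg Fin.val hj'
      simp only [e1_val] at hiv' hjv'
      refine Or.inr (Or.inl ⟨i, i', hi, hi',
        hρ i i' j j' (Fin.lt_def.2 (by omega)) (Fin.lt_def.2 (by omega))
          (Fin.lt_def.2 (by omega)) hr hr'⟩)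
    · exfalso
      rcases hi' with hi' | hi'
      · have h3 := congrArg Fin.val hi'
        simp only [e2_val] at h3
        have := i'.2
        omega
      · omega
  · rcases hi with hi | ⟨ha0, hi0⟩
    · -- a right
      have hiv := congrArg Fin.val hi
      simp only [e2_val] at hiv
      rcases hj with hj | hj
      swap
      · omega
      have hjv := congrArg Fin.val hj
      simp only [e2_val] at hjv
      rcases h24 with ⟨hb, hd⟩ | ⟨i', j', hi', hj', hr'⟩ | ⟨i', j', hi', hj', hr'⟩
      · omega
      · exfalso
        have h3 := congrArg Fin.val hi'
        simp only [e1_val] at h3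
        have := i'.2
        omega
      · rcases hi' with hi' | hi'
        swap
        · omega
        rcases hj' with hj' | hj'
        swap
        · omega
        have hiv' := congrArg Fin.val hi'
        have hjv' := congrArg Fin.val hj'
        simp only [e2_val] at hiv' hjv'
        exact Or.inr (Or.inr ⟨i, i', Or.inl hi, Or.inl hi',
          hτ i i' j j' (Fin.lt_def.2 (by omega)) (Fin.lt_def.2 (by omega))
            (Fin.lt_def.2 (by omega)) hr hr'⟩)
    · -- a = 0, i = 0
      rcases hj with hj | hj
      swap
      · omega
      have hjv := congrArg Fin.val hj
      simp only [e2_val] at hjv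
      rcases h24 with ⟨hb, hd⟩ | ⟨i', j', hi', hj', hr'⟩ | ⟨i', j', hi', hj', hr'⟩
      · omega
      · exfalso
        have h3 := congrArg Fin.val hj'
        simp only [e1_val] at h3
        have := j'.2
        omega
      · rcases hi' with hi' | hi'
        swap
        · omega
        rcases hj' with hj' | hj'
        swap
        · omega
        have hiv' := congrArg Fin.val hi'
        have hjv' := congrArg Fin.val hj'
        simp only [e2_val] at hiv' hjv'
        by_cases hz : i'.1 = 0
        · refine Or.inr (Or.inr ⟨i, i', Or.inr ⟨ha0, hi0⟩, Or.inl hi', ?_⟩)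
          have hii : i = i' := Fin.ext (by omega)
          cases hii
          exact τ.iseqv.refl _
        · exact Or.inr (Or.inr ⟨i, i', Or.inr ⟨ha0, hi0⟩, Or.inl hi',
            hτ i i' j j' (Fin.lt_def.2 (by omega)) (Fin.lt_def.2 (by omega))
              (Fin.lt_def.2 (by omega)) hr hr'⟩)

section Fiber

variable {n s : ℕ} {π : Setoid (Fin (n + 1))}

lemma sOf_pos (π : Setoid (Fin (n + 1))) : 1 ≤ sOf n π := by
  rw [sOf]
  split
  · next h =>
    have hm := Finset.min'_mem _ h
    have h0 : ((blk π 0).erase 0).min' h ≠ 0 := (Finset.mem_erase.1 hm).1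
    have : 0 < (((blk π 0).erase 0).min' h).1 := by
      rcases Nat.eq_zero_or_pos (((blk π 0).erase 0).min' h).1 with h' | h'
      · exact absurd (Fin.ext h' : _ = (0 : Fin (n+1))) h0
      · exact h'
    omega
  · omega

lemma sOf_le (π : Setoid (Fin (n + 1))) : sOf n π ≤ n + 1 := by
  rw [sOf]
  split
  · next h =>
    have := (((blk π 0).erase 0).min' h).2
    omega
  · omega

lemma rel_zero_ge (hfib : sOf n π = s) {b : Fin (n + 1)} (hb : π.r 0 b) :
    b.1 = 0 ∨ s ≤ b.1 := by
  by_cases h0 : b.1 = 0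
  · exact Or.inl h0
  right
  have hbT : b ∈ (blk π 0).erase 0 :=
    Finset.mem_erase.2 ⟨fun h => h0 (by rw [h]; rfl), mem_blk.2 hb⟩
  have hne : ((blk π 0).erase 0).Nonempty := ⟨b, hbT⟩
  rw [sOf, dif_pos hne] at hfib
  rw [← hfib]
  exact Fin.le_def.1 (Finset.min'_le _ _ hbT)

lemma rel_zero_s (hfib : sOf n π = s) (hsn : s ≤ n) : π.r 0 ⟨s, by omega⟩ := by
  have hne : ((blk π 0).erase 0).Nonempty := by
    by_contra h
    rw [sOf, dif_neg h] at hfib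
    omega
  rw [sOf, dif_pos hne] at hfib
  have hm := Finset.min'_mem _ hne
  have hblk := (Finset.mem_erase.1 hm).2
  have : ((blk π 0).erase 0).min' hne = ⟨s, by omega⟩ := Fin.ext hfib
  rw [← this]
  exact mem_blk.1 hblk

lemma middle_closed (hπ : IsNC π) (hfib : sOf n π = s) {a b : Fin (n + 1)}
    (ha1 : 1 ≤ a.1) (ha2 : a.1 < s) (hab : π.r a b) : 1 ≤ b.1 ∧ b.1 < s := by
  have hb1 : 1 ≤ b.1 := by
    by_contra h
    have hb0 : b = 0 := Fin.ext (by simp only [Fin.val_zero]; omega)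
    rw [hb0] at hab
    have := rel_zero_ge hfib (π.iseqv.symm hab)
    omega
  refine ⟨hb1, ?_⟩
  by_contra h
  push_neg at h
  have hsn : s ≤ n := by have := b.2; omega
  have h0s := rel_zero_s hfib hsn
  by_cases hbs : b.1 = s
  · have hb : b = (⟨s, by omega⟩ : Fin (n + 1)) := Fin.ext hbs
    rw [hb] at hab
    have h0a : π.r 0 a := π.iseqv.trans h0s (π.iseqv.symm hab)
    have := rel_zero_ge hfib h0a
    omega
  · have h0a := hπ 0 a ⟨s, by omega⟩ b (Fin.lt_def.2 (by simp only [Fin.val_zero]; omega))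
      (Fin.lt_def.2 (by show a.1 < s; omega)) (Fin.lt_def.2 (by show s < b.1; omega)) h0s hab
    have := rel_zero_ge hfib h0a
    omega

lemma right_closed (hπ : IsNC π) (hfib : sOf n π = s) {a b : Fin (n + 1)}
    (ha : s ≤ a.1) (h0a : ¬ π.r 0 a) (hab : π.r a b) : s ≤ b.1 := by
  by_contra h
  push_neg at h
  by_cases hb0 : b.1 = 0
  · have : b = 0 := Fin.ext hb0
    rw [this] at hab
    exact h0a (π.iseqv.symm hab)
  · have := middle_closed hπ hfib (by omega) h (π.iseqv.symm hab)
    have hs1 := sOf_pos π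
    omega


lemma res_glue1 {n s : ℕ} (hs1 : 1 ≤ s) (hs2 : s ≤ n + 1) (ρ : Setoid (Fin (s - 1)))
    (τ : Setoid (Fin (n + 1 - s))) :
    resAlong (e1 n s hs2) (glue n s hs1 hs2 ρ τ) = ρ := by
  apply Setoid.ext
  intro i j
  rw [resAlong_r, glue_r]
  constructor
  · rintro (⟨hi, hj⟩ | ⟨i', j', hi', hj', hr⟩ | ⟨i', j', hi', hj', hr⟩)
    · exact absurd hi (by simp [e1_val])
    · have h1 : i' = i := e1_inj hi'
      have h2 : j' = j := e1_inj hj'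
      rw [← h1, ← h2]
      exact hr
    · exfalso
      rcases hi' with hi' | hi'
      · have h1 := congrArg Fin.val hi'
        simp only [e2_val, e1_val] at h1
        have := i.2
        omega
      · simp [e1_val] at hi'
  · intro h
    exact Or.inr (Or.inl ⟨i, j, rfl, rfl, h⟩)

lemma res_glue2 {n s : ℕ} (hs1 : 1 ≤ s) (hs2 : s ≤ n + 1) (ρ : Setoid (Fin (s - 1)))
    (τ : Setoid (Fin (n + 1 - s))) :
    resAlong (e2 n s) (glue n s hs1 hs2 ρ τ) = τ := by
  apply Setoid.ext
  intro i j
  rw [resAlong_r, glue_r]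
  constructor
  · rintro (⟨hi, hj⟩ | ⟨i', j', hi', hj', hr⟩ | ⟨i', j', hi', hj', hr⟩)
    · exfalso
      have : (e2 n s i).1 = i.1 + s := rfl
      omega
    · exfalso
      have h1 := congrArg Fin.val hi'
      simp only [e1_val, e2_val] at h1
      have := i'.2
      omega
    · have h1 : i' = i := by
        rcases hi' with hi' | hi'
        · exact e2_inj hi'
        · exfalso
          have : (e2 n s i).1 = i.1 + s := rfl
          omega
      have h2 : j' = j := by
        rcases hj' with hj' | hj'
        · exact e2_inj hj'
        · exfalso
          have : (e2 n s j).1 = j.1 + s := rfl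
          omega
      rw [← h1, ← h2]
      exact hr
  · intro h
    exact Or.inr (Or.inr ⟨i, j, Or.inl rfl, Or.inl rfl, h⟩)

lemma glue_res {n s : ℕ} {π : Setoid (Fin (n + 1))} (hπ : IsNC π) (hfib : sOf n π = s)
    (hs1 : 1 ≤ s) (hs2 : s ≤ n + 1) :
    glue n s hs1 hs2 (resAlong (e1 n s hs2) π) (resAlong (e2 n s) π) = π := by
  apply Setoid.ext
  intro a b
  rw [glue_r]
  constructor
  · rintro (⟨ha, hb⟩ | ⟨i, j, hi, hj, hr⟩ | ⟨i, j, hi, hj, hr⟩)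
    · have : a = b := Fin.ext (ha.trans hb.symm)
      rw [this]
    · rw [resAlong_r, hi, hj] at hr
      exact hr
    · rw [resAlong_r] at hr
      have hsn : s ≤ n := by have := i.2; omega
      have h0s := rel_zero_s hfib hsn
      rcases hi with hi | ⟨ha0, hi0⟩ <;> rcases hj with hj | ⟨hb0, hj0⟩
      · rw [hi, hj] at hr
        exact hr
      · -- b = 0
        have hbz : b = 0 := Fin.ext hb0
        have hej : e2 n s j = ⟨s, by omega⟩ := Fin.ext (by simp only [e2_val]; omega)
        rw [hi, hej] at hr
        rw [hbz]
        exact π.iseqv.symm (π.iseqv.trans h0s (π.iseqv.symm hr))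
      · -- a = 0
        have haz : a = 0 := Fin.ext ha0
        have hei : e2 n s i = ⟨s, by omega⟩ := Fin.ext (by simp only [e2_val]; omega)
        rw [hei, hj] at hr
        rw [haz]
        exact π.iseqv.trans h0s hr
      · have haz : a = 0 := Fin.ext ha0
        have hbz : b = 0 := Fin.ext hb0
        rw [haz, hbz]
  · intro hab
    rcases Nat.eq_zero_or_pos a.1 with ha0 | ha1 <;> rcases Nat.eq_zero_or_pos b.1 with hb0 | hb1
    · exact Or.inl ⟨ha0, hb0⟩
    · -- a = 0
      have haz : a = 0 := Fin.ext ha0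
      rw [haz] at hab
      rcases rel_zero_ge hfib hab with h | h
      · omega
      · have hsn : s ≤ n := by have := b.2; omega
        have h0s := rel_zero_s hfib hsn
        refine Or.inr (Or.inr ⟨⟨0, by omega⟩, ⟨b.1 - s, by have := b.2; omega⟩,
          Or.inr ⟨ha0, rfl⟩, Or.inl (Fin.ext (by simp only [e2_val]; omega)), ?_⟩)
        rw [resAlong_r]
        have he0 : e2 n s ⟨0, by omega⟩ = ⟨s, by omega⟩ := Fin.ext (by simp only [e2_val]; omega)
        have heb : e2 n s ⟨b.1 - s, by have := b.2; omega⟩ = b :=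
          Fin.ext (by simp only [e2_val]; omega)
        rw [he0, heb]
        exact π.iseqv.trans (π.iseqv.symm h0s) hab
    · -- b = 0
      have hbz : b = 0 := Fin.ext hb0
      rw [hbz] at hab
      have hab' := π.iseqv.symm hab
      rcases rel_zero_ge hfib hab' with h | h
      · omega
      · have hsn : s ≤ n := by have := a.2; omega
        have h0s := rel_zero_s hfib hsn
        refine Or.inr (Or.inr ⟨⟨a.1 - s, by have := a.2; omega⟩, ⟨0, by omega⟩,
          Or.inl (Fin.ext (by simp only [e2_val]; omega)), Or.inr ⟨hb0, rfl⟩, ?_⟩)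
        rw [resAlong_r]
        have he0 : e2 n s ⟨0, by omega⟩ = ⟨s, by omega⟩ := Fin.ext (by simp only [e2_val]; omega)
        have hea : e2 n s ⟨a.1 - s, by have := a.2; omega⟩ = a :=
          Fin.ext (by simp only [e2_val]; omega)
        rw [he0, hea]
        exact π.iseqv.trans (π.iseqv.symm hab') h0s
    · rcases Nat.lt_or_ge a.1 s with has | has <;> rcases Nat.lt_or_ge b.1 s with hbs | hbs
      · refine Or.inr (Or.inl ⟨⟨a.1 - 1, by omega⟩, ⟨b.1 - 1, by omega⟩,
          Fin.ext (by simp only [e1_val]; omega), Fin.ext (by simp only [e1_val]; omega), ?_⟩)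
        rw [resAlong_r]
        have hea : e1 n s hs2 ⟨a.1 - 1, by omega⟩ = a := Fin.ext (by simp only [e1_val]; omega)
        have heb : e1 n s hs2 ⟨b.1 - 1, by omega⟩ = b := Fin.ext (by simp only [e1_val]; omega)
        rw [hea, heb]
        exact hab
      · exfalso
        have := middle_closed hπ hfib ha1 has hab
        omega
      · exfalso
        have := middle_closed hπ hfib hb1 hbs (π.iseqv.symm hab)
        omega
      · refine Or.inr (Or.inr ⟨⟨a.1 - s, by have := a.2; omega⟩, ⟨b.1 - s, by have := b.2; omega⟩,
          Or.inl (Fin.ext (by simp only [e2_val]; omega)),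
          Or.inl (Fin.ext (by simp only [e2_val]; omega)), ?_⟩)
        rw [resAlong_r]
        have hea : e2 n s ⟨a.1 - s, by have := a.2; omega⟩ = a :=
          Fin.ext (by simp only [e2_val]; omega)
        have heb : e2 n s ⟨b.1 - s, by have := b.2; omega⟩ = b :=
          Fin.ext (by simp only [e2_val]; omega)
        rw [hea, heb]
        exact hab

lemma sOf_glue {n s : ℕ} (hs1 : 1 ≤ s) (hs2 : s ≤ n + 1) (ρ : Setoid (Fin (s - 1)))
    (τ : Setoid (Fin (n + 1 - s))) :
    sOf n (glue n s hs1 hs2 ρ τ) = s := by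
  have hT : ∀ b : Fin (n + 1), b ∈ (blk (glue n s hs1 hs2 ρ τ) 0).erase 0 → s ≤ b.1 := by
    intro b hb
    obtain ⟨hb0, hbblk⟩ := Finset.mem_erase.1 hb
    have hrel := mem_blk.1 hbblk
    rw [glue_r] at hrel
    rcases hrel with ⟨h1, h2⟩ | ⟨i, j, hi, hj, hr⟩ | ⟨i, j, hi, hj, hr⟩
    · exact absurd (Fin.ext h2 : b = 0) hb0
    · exfalso
      have h1 := congrArg Fin.val hi
      simp only [e1_val, Fin.val_zero] at h1
      omega
    · rcases hj with hj | hj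
      · have h1 := congrArg Fin.val hj
        simp only [e2_val] at h1
        omega
      · exact absurd (Fin.ext hj.1 : b = 0) hb0
  rcases Nat.lt_or_ge n (s) with hsn | hsn
  · -- s = n + 1 : the erase set is empty
    have hs : s = n + 1 := by omega
    have hempty : ¬ ((blk (glue n s hs1 hs2 ρ τ) 0).erase 0).Nonempty := by
      rintro ⟨b, hb⟩
      have := hT b hb
      have := b.2
      omega
    rw [sOf, dif_neg hempty, hs]
  · -- s ≤ n : ⟨s⟩ is the min of the erase set
    have hmem : (⟨s, by omega⟩ : Fin (n + 1)) ∈ (blk (glue n s hs1 hs2 ρ τ) 0).erase 0 := by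
      refine Finset.mem_erase.2 ⟨?_, mem_blk.2 ?_⟩
      · intro h
        have := congrArg Fin.val h
        simp only [Fin.val_zero] at this
        omega
      · rw [glue_r]
        refine Or.inr (Or.inr ⟨⟨0, by omega⟩, ⟨0, by omega⟩, Or.inr ⟨rfl, rfl⟩,
          Or.inl (Fin.ext (by simp only [e2_val]; omega)), τ.iseqv.refl _⟩)
    have hne : ((blk (glue n s hs1 hs2 ρ τ) 0).erase 0).Nonempty := ⟨_, hmem⟩
    rw [sOf, dif_pos hne]
    have h1 := hT _ (Finset.min'_mem _ hne)
    have h2 : (((blk (glue n s hs1 hs2 ρ τ) 0).erase 0).min' hne).1 ≤ s :=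
      Fin.le_def.1 (Finset.min'_le _ _ hmem)
    omega


section Weights

open Finset

variable {n s : ℕ} {π : Setoid (Fin (n + 1))}

lemma blk0_insert (hfib : sOf n π = s) (hs1 : 1 ≤ s) (hs2 : s ≤ n + 1) :
    blk0 π = insert 0 ((blk0 (resAlong (e2 n s) π)).image (e2 n s)) := by
  ext b
  rw [blk0_eq, mem_blk, Finset.mem_insert]
  constructor
  · intro hb
    rcases rel_zero_ge hfib hb with h | h
    · exact Or.inl (Fin.ext h)
    · right
      have hsn : s ≤ n := by have := b.2; omega
      have h0s := rel_zero_s hfib hsn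
      refine Finset.mem_image.2 ⟨⟨b.1 - s, by have := b.2; omega⟩, mem_blk0.2
        ⟨⟨0, by omega⟩, rfl, ?_⟩, Fin.ext (by simp only [e2_val]; omega)⟩
      rw [resAlong_r]
      have he0 : e2 n s ⟨0, by omega⟩ = ⟨s, by omega⟩ := Fin.ext (by simp only [e2_val]; omega)
      have heb : e2 n s ⟨b.1 - s, by have := b.2; omega⟩ = b :=
        Fin.ext (by simp only [e2_val]; omega)
      rw [he0, heb]
      exact π.iseqv.trans (π.iseqv.symm h0s) hb
  · rintro (rfl | hb)
    · exact π.iseqv.refl 0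
    · obtain ⟨j, hj, rfl⟩ := Finset.mem_image.1 hb
      obtain ⟨i, hi0, hr⟩ := mem_blk0.1 hj
      rw [resAlong_r] at hr
      have hsn : s ≤ n := by have := i.2; omega
      have h0s := rel_zero_s hfib hsn
      have hei : e2 n s i = ⟨s, by omega⟩ := Fin.ext (by simp only [e2_val]; omega)
      rw [hei] at hr
      exact π.iseqv.trans h0s hr

lemma blk0_card (hfib : sOf n π = s) (hs1 : 1 ≤ s) (hs2 : s ≤ n + 1) :
    (blk0 π).card = (blk0 (resAlong (e2 n s) π)).card + 1 := by
  rw [blk0_insert hfib hs1 hs2, Finset.card_insert_of_notMem, Finset.card_image_of_injective _ e2_inj]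
  intro h
  obtain ⟨j, -, hj⟩ := Finset.mem_image.1 h
  have := congrArg Fin.val hj
  simp only [e2_val, Fin.val_zero] at this
  omega

lemma e1_mem_reps (hπ : IsNC π) (hfib : sOf n π = s) (hs1 : 1 ≤ s) (hs2 : s ≤ n + 1)
    (i : Fin (s - 1)) :
    e1 n s hs2 i ∈ reps π ↔ i ∈ reps (resAlong (e1 n s hs2) π) := by
  constructor
  · intro h
    refine mem_reps.2 fun j hj => ?_
    rw [resAlong_r] at hj
    have := mem_reps.1 h _ hj
    have hle := Fin.le_def.1 this
    simp only [e1_val] at hle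
    exact Fin.le_def.2 (by omega)
  · intro h
    refine mem_reps.2 fun b hb => ?_
    have hm := middle_closed hπ hfib (by simp [e1_val]) (by have := i.2; simp only [e1_val]; omega) hb
    have heb : e1 n s hs2 ⟨b.1 - 1, by omega⟩ = b := Fin.ext (by simp only [e1_val]; omega)
    have hr : (resAlong (e1 n s hs2) π).r i ⟨b.1 - 1, by omega⟩ := by
      rw [resAlong_r, heb]
      exact hb
    have h2 : i.1 ≤ b.1 - 1 := Fin.le_def.1 (mem_reps.1 h _ hr)
    exact Fin.le_def.2 (by simp only [e1_val]; omega)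

lemma blk_e1 (hπ : IsNC π) (hfib : sOf n π = s) (hs1 : 1 ≤ s) (hs2 : s ≤ n + 1)
    (i : Fin (s - 1)) :
    blk π (e1 n s hs2 i) = (blk (resAlong (e1 n s hs2) π) i).image (e1 n s hs2) := by
  ext b
  rw [mem_blk]
  constructor
  · intro hb
    have hm := middle_closed hπ hfib (by simp [e1_val]) (by have := i.2; simp only [e1_val]; omega) hb
    have heb : e1 n s hs2 ⟨b.1 - 1, by omega⟩ = b := Fin.ext (by simp only [e1_val]; omega)
    refine Finset.mem_image.2 ⟨⟨b.1 - 1, by omega⟩, mem_blk.2 ?_, heb⟩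
    rw [resAlong_r, heb]
    exact hb
  · intro hb
    obtain ⟨j, hj, rfl⟩ := Finset.mem_image.1 hb
    have hr := mem_blk.1 hj
    rw [resAlong_r] at hr
    exact hr

lemma not_rel_zero_e2 (hfib : sOf n π = s) {i : Fin (n + 1 - s)}
    (hrep : i ∈ reps (resAlong (e2 n s) π)) (hi0 : i.1 ≠ 0) : ¬ π.r 0 (e2 n s i) := by
  intro hc
  have hsn : s ≤ n := by have := i.2; omega
  have h0s := rel_zero_s hfib hsn
  have hr : (resAlong (e2 n s) π).r i ⟨0, by omega⟩ := by
    rw [resAlong_r]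
    have he0 : e2 n s ⟨0, by omega⟩ = ⟨s, by omega⟩ := Fin.ext (by simp only [e2_val]; omega)
    rw [he0]
    exact π.iseqv.symm (π.iseqv.trans (π.iseqv.symm h0s) hc)
  have := Fin.le_def.1 (mem_reps.1 hrep _ hr)
  simp only [Fin.val_zero] at this
  omega

lemma e2_mem_reps (hπ : IsNC π) (hfib : sOf n π = s) (hs1 : 1 ≤ s) (hs2 : s ≤ n + 1)
    {i : Fin (n + 1 - s)} (hi0 : i.1 ≠ 0) :
    e2 n s i ∈ reps π ↔ i ∈ reps (resAlong (e2 n s) π) := by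
  constructor
  · intro h
    refine mem_reps.2 fun j hj => ?_
    rw [resAlong_r] at hj
    have hle := Fin.le_def.1 (mem_reps.1 h _ hj)
    simp only [e2_val] at hle
    exact Fin.le_def.2 (by omega)
  · intro h
    have h0 := not_rel_zero_e2 hfib h hi0
    refine mem_reps.2 fun b hb => ?_
    have hbs : s ≤ b.1 := right_closed hπ hfib (by simp [e2_val]) h0 hb
    have heb : e2 n s ⟨b.1 - s, by have := b.2; omega⟩ = b :=
      Fin.ext (by simp only [e2_val]; omega)
    have hr : (resAlong (e2 n s) π).r i ⟨b.1 - s, by have := b.2; omega⟩ := by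
      rw [resAlong_r, heb]
      exact hb
    have := Fin.le_def.1 (mem_reps.1 h _ hr)
    simp only [e2_val] at this ⊢
    exact Fin.le_def.2 (by simp only [e2_val]; omega)

lemma blk_e2 (hπ : IsNC π) (hfib : sOf n π = s) (hs1 : 1 ≤ s) (hs2 : s ≤ n + 1)
    {i : Fin (n + 1 - s)} (hrep : i ∈ reps (resAlong (e2 n s) π)) (hi0 : i.1 ≠ 0) :
    blk π (e2 n s i) = (blk (resAlong (e2 n s) π) i).image (e2 n s) := by
  have h0 := not_rel_zero_e2 hfib hrep hi0
  ext b
  rw [mem_blk]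
  constructor
  · intro hb
    have hbs : s ≤ b.1 := right_closed hπ hfib (by simp [e2_val]) h0 hb
    have heb : e2 n s ⟨b.1 - s, by have := b.2; omega⟩ = b :=
      Fin.ext (by simp only [e2_val]; omega)
    refine Finset.mem_image.2 ⟨⟨b.1 - s, by have := b.2; omega⟩, mem_blk.2 ?_, heb⟩
    rw [resAlong_r, heb]
    exact hb
  · intro hb
    obtain ⟨j, hj, rfl⟩ := Finset.mem_image.1 hb
    have hr := mem_blk.1 hj
    rw [resAlong_r] at hr
    exact hr

lemma reps_split (hπ : IsNC π) (hfib : sOf n π = s) (hs1 : 1 ≤ s) (hs2 : s ≤ n + 1) :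
    (reps π).filter (fun a => a.1 ≠ 0)
      = ((reps (resAlong (e1 n s hs2) π)).image (e1 n s hs2)) ∪
        (((reps (resAlong (e2 n s) π)).filter (fun i => i.1 ≠ 0)).image (e2 n s)) := by
  ext a
  constructor
  · intro ha
    obtain ⟨harep, ha0⟩ := Finset.mem_filter.1 ha
    rcases Nat.lt_or_ge a.1 s with has | has
    · refine Finset.mem_union.2 (Or.inl (Finset.mem_image.2 ⟨⟨a.1 - 1, by omega⟩, ?_, Fin.ext (by simp only [e1_val]; omega)⟩))
      have hea : e1 n s hs2 ⟨a.1 - 1, by omega⟩ = a := Fin.ext (by simp only [e1_val]; omega)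
      rw [← e1_mem_reps hπ hfib hs1 hs2, hea]
      exact harep
    · have hane : a.1 ≠ s := by
        intro h
        have hsn : s ≤ n := by have := a.2; omega
        have h0s := rel_zero_s hfib hsn
        have ha' : a = (⟨s, by omega⟩ : Fin (n + 1)) := Fin.ext h
        rw [ha'] at harep
        have := Fin.le_def.1 (mem_reps.1 harep 0 (π.iseqv.symm h0s))
        simp only [Fin.val_zero] at this
        omega
      refine Finset.mem_union.2 (Or.inr (Finset.mem_image.2 ⟨⟨a.1 - s, by have := a.2; omega⟩,
        Finset.mem_filter.2 ⟨?_, by simp; omega⟩, Fin.ext (by simp only [e2_val]; omega)⟩))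
      have hea : e2 n s ⟨a.1 - s, by have := a.2; omega⟩ = a :=
        Fin.ext (by simp only [e2_val]; omega)
      rw [← e2_mem_reps hπ hfib hs1 hs2 (by simp; omega), hea]
      exact harep
  · intro ha
    rcases Finset.mem_union.1 ha with ha | ha
    · obtain ⟨i, hi, rfl⟩ := Finset.mem_image.1 ha
      exact Finset.mem_filter.2 ⟨(e1_mem_reps hπ hfib hs1 hs2 i).2 hi, by simp [e1_val]⟩
    · obtain ⟨i, hi, rfl⟩ := Finset.mem_image.1 ha
      obtain ⟨hirep, hi0⟩ := Finset.mem_filter.1 hi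
      refine Finset.mem_filter.2 ⟨(e2_mem_reps hπ hfib hs1 hs2 hi0).2 hirep, by simp [e2_val]; omega⟩

lemma wgt_eq (c d : ℕ → ℂ) (hπ : IsNC π) (hfib : sOf n π = s) (hs1 : 1 ≤ s) (hs2 : s ≤ n + 1) :
    wgt c d π = (∏ i ∈ reps (resAlong (e1 n s hs2) π),
        c (blk (resAlong (e1 n s hs2) π) i).card) * wgt c (shiftc d) (resAlong (e2 n s) π) := by
  rw [wgt, wgt, blk0_card hfib hs1 hs2, reps_split hπ hfib hs1 hs2]
  rw [Finset.prod_union, Finset.prod_image (fun a _ b _ h => e1_inj h),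
    Finset.prod_image (fun a _ b _ h => e2_inj h)]
  · have h1 : ∀ i ∈ reps (resAlong (e1 n s hs2) π),
        c (blk π (e1 n s hs2 i)).card = c (blk (resAlong (e1 n s hs2) π) i).card := by
      intro i _
      rw [blk_e1 hπ hfib hs1 hs2, Finset.card_image_of_injective _ e1_inj]
    have h2 : ∀ i ∈ (reps (resAlong (e2 n s) π)).filter (fun i => i.1 ≠ 0),
        c (blk π (e2 n s i)).card = c (blk (resAlong (e2 n s) π) i).card := by
      intro i hi
      obtain ⟨hirep, hi0⟩ := Finset.mem_filter.1 hi
      rw [blk_e2 hπ hfib hs1 hs2 hirep hi0, Finset.card_image_of_injective _ e2_inj]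
    rw [Finset.prod_congr rfl h1, Finset.prod_congr rfl h2, shiftc]
    ring
  · rw [Finset.disjoint_left]
    intro a ha hb
    obtain ⟨i, -, rfl⟩ := Finset.mem_image.1 ha
    obtain ⟨j, -, hj⟩ := Finset.mem_image.1 hb
    have := congrArg Fin.val hj
    simp only [e1_val, e2_val] at this
    have := i.2
    omega

end Weights
end Fiber

end AuxGlue


section AuxRec

open Finset PowerSeries

lemma fiber_sum (c d : ℕ → ℂ) (n s : ℕ) (hs1 : 1 ≤ s) (hs2 : s ≤ n + 1) :
    ∑ π ∈ Finset.univ.filter (fun π : NC (n + 1) => sOf n π.1 = s), wgt c d π.1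
      = Nn c (s - 1) * Aa c (shiftc d) (n + 1 - s) := by
  rw [Nn, Aa, Fintype.sum_mul_sum, ← Finset.sum_product', Finset.univ_product_univ]
  refine Finset.sum_bij'
    (fun π _ => ((⟨resAlong (e1 n s hs2) π.1, resAlong_NC e1_strictMono π.2⟩ : NC (s - 1)),
      (⟨resAlong (e2 n s) π.1, resAlong_NC e2_strictMono π.2⟩ : NC (n + 1 - s))))
    (fun p _ => ⟨glue n s hs1 hs2 p.1.1 p.2.1, glue_NC hs1 hs2 p.1.2 p.2.2⟩)
    ?_ ?_ ?_ ?_ ?_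
  · intro a _
    exact Finset.mem_univ _
  · intro p _
    exact Finset.mem_filter.2 ⟨Finset.mem_univ _, sOf_glue hs1 hs2 _ _⟩
  · intro π hπ
    exact Subtype.ext (glue_res π.2 ((Finset.mem_filter.1 hπ).2) hs1 hs2)
  · intro p _
    exact Prod.ext (Subtype.ext (res_glue1 hs1 hs2 _ _)) (Subtype.ext (res_glue2 hs1 hs2 _ _))
  · intro π hπ
    exact wgt_eq c d π.2 ((Finset.mem_filter.1 hπ).2) hs1 hs2

lemma Aa_rec (c d : ℕ → ℂ) (n : ℕ) :
    Aa c d (n + 1) = ∑ p ∈ Finset.range (n + 1), Nn c p * Aa c (shiftc d) (n - p) := by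
  rw [Aa]
  rw [← Finset.sum_fiberwise_of_maps_to (g := fun π : NC (n + 1) => sOf n π.1)
    (t := Finset.Icc 1 (n + 1)) (fun π _ => Finset.mem_Icc.2 ⟨sOf_pos _, sOf_le _⟩)
    (fun π => wgt c d π.1)]
  rw [Finset.sum_congr rfl (fun s hs => fiber_sum c d n s (Finset.mem_Icc.1 hs).1
    (Finset.mem_Icc.1 hs).2)]
  refine Finset.sum_bij' (fun s _ => s - 1) (fun p _ => p + 1) ?_ ?_ ?_ ?_ ?_
  · intro s hs
    have := Finset.mem_Icc.1 hs
    simp only [Finset.mem_range]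
    omega
  · intro p hp
    have := Finset.mem_range.1 hp
    simp only [Finset.mem_Icc]
    omega
  · intro s hs
    have := Finset.mem_Icc.1 hs
    omega
  · intro p _
    omega
  · intro s hs
    have := Finset.mem_Icc.1 hs
    rw [show n + 1 - s = n - (s - 1) from by omega]

lemma Nn_eq_Aa (c : ℕ → ℂ) (m : ℕ) : Nn c (m + 1) = Aa c c (m + 1) := by
  rw [Nn, Aa]
  refine Finset.sum_congr rfl fun π _ => ?_
  rw [wgt, blk0_eq]
  have h0 : (0 : Fin (m + 1)) ∈ reps π.1 := mem_reps.2 fun b _ => Fin.zero_le b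
  rw [← Finset.mul_prod_erase (reps π.1) (fun a => c (blk π.1 a).card) h0]
  congr 1
  refine Finset.prod_congr ?_ fun _ _ => rfl
  ext a
  rw [Finset.mem_erase, Finset.mem_filter]
  constructor
  · rintro ⟨h1, h2⟩
    exact ⟨h2, fun hv => h1 (Fin.ext hv)⟩
  · rintro ⟨h1, h2⟩
    exact ⟨fun he => h2 (by rw [he]; rfl), h1⟩

/-- the generating series of `Nn c`. -/
def MserC (c : ℕ → ℂ) : PowerSeries ℂ := PowerSeries.mk (Nn c)

def FserC (c : ℕ → ℂ) : PowerSeries ℂ := PowerSeries.X * MserC c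

lemma coeff_Fser_succ (c : ℕ → ℂ) (p : ℕ) : coeff (R := ℂ) (p + 1) (FserC c) = Nn c p := by
  rw [FserC, PowerSeries.coeff_succ_X_mul, MserC, PowerSeries.coeff_mk]

lemma constantCoeff_Fser (c : ℕ → ℂ) : constantCoeff (R := ℂ) (FserC c) = 0 := by
  simp [FserC]

lemma Aa_eq_coeff (c : ℕ → ℂ) :
    ∀ m d, Aa c d m = ∑ j ∈ Finset.range (m + 1), d j * coeff (R := ℂ) m ((FserC c) ^ j) := by
  intro m
  induction m using Nat.strong_induction_on with
  | _ m ih =>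
  intro d
  rcases m with - | m
  · rw [Aa_zero, Finset.sum_range_one, pow_zero]
    simp
  · rw [Aa_rec]
    have hstep : ∀ p ∈ Finset.range (m + 1), Nn c p * Aa c (shiftc d) (m - p)
        = coeff (R := ℂ) (p + 1) (FserC c) *
            ∑ j ∈ Finset.range (m + 1), shiftc d j * coeff (R := ℂ) (m - p) ((FserC c) ^ j) := by
      intro p hp
      rw [coeff_Fser_succ, ih (m - p) (by have := Finset.mem_range.1 hp; omega) (shiftc d)]
      congr 1
      refine Finset.sum_subset (Finset.range_subset_range.2 (by omega)) fun j hj hnj => ?_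
      rw [coeff_pow_zero_of_lt (constantCoeff_Fser c) j (m - p)
        (by simp only [Finset.mem_range] at hj hnj; omega), mul_zero]
    rw [Finset.sum_congr rfl hstep]
    have hF0 : d 0 * coeff (R := ℂ) (m + 1) ((FserC c) ^ 0) = 0 := by
      rw [pow_zero, PowerSeries.coeff_one, if_neg (by omega), mul_zero]
    have hexp : ∀ j ∈ Finset.range (m + 1), d (j + 1) * coeff (R := ℂ) (m + 1) ((FserC c) ^ (j + 1))
        = ∑ p ∈ Finset.range (m + 2),
            d (j + 1) * (coeff (R := ℂ) p (FserC c) * coeff (R := ℂ) (m + 1 - p) ((FserC c) ^ j)) := by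
      intro j _
      rw [pow_succ', PowerSeries.coeff_mul, Finset.Nat.sum_antidiagonal_eq_sum_range_succ_mk,
        Finset.mul_sum]
    have hG0 : ∑ j ∈ Finset.range (m + 1),
        d (j + 1) * (coeff (R := ℂ) 0 (FserC c) * coeff (R := ℂ) (m + 1 - 0) ((FserC c) ^ j)) = 0 := by
      refine Finset.sum_eq_zero fun j _ => ?_
      rw [show coeff (R := ℂ) 0 (FserC c) = 0 from by
        simpa [PowerSeries.coeff_zero_eq_constantCoeff] using constantCoeff_Fser c]
      rw [zero_mul, mul_zero]
    symm
    calc ∑ j ∈ Finset.range (m + 2), d j * coeff (R := ℂ) (m + 1) ((FserC c) ^ j)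
        = (∑ j ∈ Finset.range (m + 1), d (j + 1) * coeff (R := ℂ) (m + 1) ((FserC c) ^ (j + 1)))
            + d 0 * coeff (R := ℂ) (m + 1) ((FserC c) ^ 0) := Finset.sum_range_succ' _ _
      _ = ∑ j ∈ Finset.range (m + 1), ∑ p ∈ Finset.range (m + 2),
            d (j + 1) * (coeff (R := ℂ) p (FserC c) * coeff (R := ℂ) (m + 1 - p) ((FserC c) ^ j)) := by
          rw [hF0, add_zero]
          exact Finset.sum_congr rfl hexp
      _ = ∑ p ∈ Finset.range (m + 2), ∑ j ∈ Finset.range (m + 1),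
            d (j + 1) * (coeff (R := ℂ) p (FserC c) * coeff (R := ℂ) (m + 1 - p) ((FserC c) ^ j)) :=
          Finset.sum_comm
      _ = (∑ p ∈ Finset.range (m + 1), ∑ j ∈ Finset.range (m + 1),
            d (j + 1) * (coeff (R := ℂ) (p + 1) (FserC c) * coeff (R := ℂ) (m + 1 - (p + 1)) ((FserC c) ^ j)))
            + ∑ j ∈ Finset.range (m + 1),
                d (j + 1) * (coeff (R := ℂ) 0 (FserC c) * coeff (R := ℂ) (m + 1 - 0) ((FserC c) ^ j)) :=
          Finset.sum_range_succ' _ _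
      _ = ∑ p ∈ Finset.range (m + 1), coeff (R := ℂ) (p + 1) (FserC c) *
            ∑ j ∈ Finset.range (m + 1), shiftc d j * coeff (R := ℂ) (m - p) ((FserC c) ^ j) := by
          rw [hG0, add_zero]
          refine Finset.sum_congr rfl fun p hp => ?_
          rw [Finset.mul_sum]
          refine Finset.sum_congr rfl fun j hj => ?_
          rw [show m + 1 - (p + 1) = m - p from by omega]
          simp only [shiftc]
          ring

end AuxRec


section AuxMain

open Finset PowerSeries

lemma uniq_eq (E : PowerSeries ℂ) {f g : PowerSeries ℂ}
    (hf0 : constantCoeff (R := ℂ) f = 0) (hg0 : constantCoeff (R := ℂ) g = 0)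
    (hf : f = X * psComp E f) (hg : g = X * psComp E g) : f = g := by
  have key : ∀ M : ℕ, ∀ k ≤ M, coeff (R := ℂ) k f = coeff (R := ℂ) k g := by
    intro M
    induction M with
    | zero =>
      intro k hk
      have hk0 : k = 0 := by omega
      subst hk0
      rw [PowerSeries.coeff_zero_eq_constantCoeff] at *
      rw [hf0, hg0]
    | succ M ihM =>
      intro k hk
      rcases Nat.lt_succ_iff_lt_or_eq.1 (by omega : k < M + 2) with h | h
      · exact ihM k (by omega)
      · subst h
        conv_lhs => rw [hf]
        conv_rhs => rw [hg]
        rw [PowerSeries.coeff_succ_X_mul, PowerSeries.coeff_succ_X_mul, coeff_psComp, coeff_psComp]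
        refine Finset.sum_congr rfl fun j _ => ?_
        rw [coeff_pow_congr (fun k hk => ihM k hk) j M le_rfl]
  ext k
  exact key k k le_rfl

lemma key_coeff (α : Dist 1) (S : PowerSeries ℂ) (hS : SChar α S) (m : ℕ) (hm : 1 ≤ m) :
    α ⟨m, fun _ => 0⟩ = Nn (fun k => coeff (R := ℂ) k (PowerSeries.invOfUnit S 1)) (m - 1) := by
  set E := PowerSeries.invOfUnit S 1 with hE
  set c : ℕ → ℂ := fun k => coeff (R := ℂ) k E with hc
  have hc0 : c 0 = 1 := by
    rw [hc]
    simp only [PowerSeries.coeff_zero_eq_constantCoeff, hE, PowerSeries.constantCoeff_invOfUnit]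
    simp
  have hSE : S * E = 1 := PowerSeries.mul_invOfUnit S 1 (by rw [hS.1]; rfl)
  have hM : MserC c = psComp E (FserC c) := by
    ext k
    rw [MserC, PowerSeries.coeff_mk, coeff_psComp]
    rcases k with - | k
    · rw [Nn_zero, Finset.sum_range_one, pow_zero]
      rw [show coeff (R := ℂ) (0 : ℕ) (1 : PowerSeries ℂ) = 1 by simp, mul_one]
      exact hc0.symm
    · rw [Nn_eq_Aa, Aa_eq_coeff]
  have hFeq : FserC c = X * psComp E (FserC c) := by
    conv_lhs => rw [FserC, hM]
  have hR0 : constantCoeff (R := ℂ) (Rser α) = 0 := by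
    rw [Rser, PowerSeries.constantCoeff_mk]
    simp
  have hRX : Rser α * psComp S (Rser α) = X := by
    have h22 := hS.2.2
    rwa [psComp_mul X S _ hR0, psComp_X hR0] at h22
  have hReq : Rser α = X * psComp E (Rser α) := by
    calc Rser α = Rser α * psComp (S * E) (Rser α) := by
          rw [hSE, psComp_one, mul_one]
      _ = (Rser α * psComp S (Rser α)) * psComp E (Rser α) := by
          rw [psComp_mul _ _ _ hR0, mul_assoc]
      _ = X * psComp E (Rser α) := by rw [hRX]
  have hRF : Rser α = FserC c := uniq_eq E hR0 (constantCoeff_Fser c) hReq hFeq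
  have h1 : α ⟨m, fun _ => 0⟩ = coeff (R := ℂ) m (Rser α) := by
    rw [Rser, PowerSeries.coeff_mk, if_neg (by omega)]
  rw [h1, hRF]
  obtain ⟨k, rfl⟩ : ∃ k, m = k + 1 := ⟨m - 1, by omega⟩
  rw [coeff_Fser_succ]
  simp

lemma theta_e (S : PowerSeries ℂ) (hS1 : constantCoeff (R := ℂ) S = 1) (m : ℕ) :
    thetaOf S (eSym m) = coeff (R := ℂ) m (PowerSeries.invOfUnit S 1) := by
  have hmap : PowerSeries.map (thetaOf S).toRingHom hSymSeries = S := by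
    ext k
    rw [PowerSeries.coeff_map, hSymSeries, PowerSeries.coeff_mk]
    simp only [AlgHom.toRingHom_eq_coe, RingHom.coe_coe]
    rcases k with - | k
    · simp [PowerSeries.coeff_zero_eq_constantCoeff, hS1]
    · rw [if_neg (by omega)]
      have hH : thetaOf S (Hgen (k + 1)) = (-1 : ℂ) ^ (k + 1) * coeff (R := ℂ) (k + 1) S := by
        rw [Hgen, dif_pos (by omega : 1 ≤ k + 1)]
        exact MvPolynomial.aeval_X _ _
      rw [map_mul, map_pow, map_neg, map_one, hH]
      rw [← mul_assoc, ← pow_add]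
      rw [Even.neg_one_pow ⟨k + 1, rfl⟩, one_mul]
  have h2 : hSymSeries * eSymSeries = 1 :=
    PowerSeries.mul_invOfUnit _ _ (by rw [hSymSeries, PowerSeries.constantCoeff_mk]; simp)
  have h3 : S * PowerSeries.map (thetaOf S).toRingHom eSymSeries = 1 := by
    have h2' := congrArg (PowerSeries.map (thetaOf S).toRingHom) h2
    rwa [map_mul, map_one, hmap] at h2'
  have h4 : S * PowerSeries.invOfUnit S 1 = 1 :=
    PowerSeries.mul_invOfUnit S 1 (by rw [hS1]; rfl)
  have h5 : PowerSeries.map (thetaOf S).toRingHom eSymSeries = PowerSeries.invOfUnit S 1 := by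
    calc PowerSeries.map (thetaOf S).toRingHom eSymSeries
        = PowerSeries.map (thetaOf S).toRingHom eSymSeries * (S * PowerSeries.invOfUnit S 1) := by
          rw [h4, mul_one]
      _ = (S * PowerSeries.map (thetaOf S).toRingHom eSymSeries) * PowerSeries.invOfUnit S 1 := by
          ring
      _ = PowerSeries.invOfUnit S 1 := by rw [h3, one_mul]
  rw [eSym, ← h5, PowerSeries.coeff_map]
  simp only [AlgHom.toRingHom_eq_coe, RingHom.coe_coe]

end AuxMain

/-- Proposition 6.9.  For every `μ ∈ G_1`, `χ_μ = θ_μ ∘ Φ`, where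
`Φ : Y^(1) → Sym` is the unital algebra homomorphism with `Φ(Y_n) = y_n`. -/
theorem char_eq_theta_comp_Phi (μ α : Dist 1) (hμ : InG μ) (hα : IsRTransform μ α)
    (S : PowerSeries ℂ) (hS : SChar α S) :
    charOf α = (thetaOf S).comp Phi := by
  apply MvPolynomial.algHom_ext
  intro q
  obtain ⟨⟨m, w⟩, hq⟩ := q
  have hq' : 2 ≤ m := hq
  rw [AlgHom.comp_apply]
  rw [charOf, Phi, MvPolynomial.aeval_X, MvPolynomial.aeval_X]
  have hw : w = fun _ => (0 : Fin 1) := funext fun i => Subsingleton.elim _ _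
  rw [hw]
  rw [key_coeff α S hS m (by omega)]
  rw [ySym, map_sum]
  rw [Nn]
  refine Finset.sum_congr rfl fun π _ => ?_
  rw [map_prod, prod_blocks_eq_prod_reps π.1 (fun B => thetaOf S (eSym B.card))]
  refine Finset.prod_congr rfl fun a _ => ?_
  exact (theta_e S hS.1 _).symm

end FreeProb

end
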